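/- Let n = p_1 p_2 p_3, where p_1 < p_2 < p_3 are primes. Then the independence number of the prime-coprime graph of the cyclic group Z_n equals p_1 (p_2 − 1)(p_3 − 1). -/

import Mathlib

/-- The prime-coprime graph: distinct vertices `g, h` are adjacent iff
`gcd (orderOf g) (orderOf h)` is `1` or a prime. -/
def primeCoprimeGraph (G : Type*) [Monoid G] : SimpleGraph G where
  Adj g h := g ≠ h ∧
    (Nat.gcd (orderOf g) (orderOf h) = 1 ∨ (Nat.gcd (orderOf g) (orderOf h)).Prime)
  symm := by
    constructor
    rintro g h ⟨hne, hd⟩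
    exact ⟨hne.symm, by rwa [Nat.gcd_comm]⟩
  loopless := by constructor; rintro g ⟨hne, -⟩; exact hne rfl

/-- A set of vertices is independent if no two of its elements are adjacent. -/
def IsIndepSet {V : Type*} (Γ : SimpleGraph V) (s : Set V) : Prop :=
  s.Pairwise fun a b => ¬ Γ.Adj a b

open scoped Classical in
/-- The independence number of a graph on a finite vertex set. -/
noncomputable def indepNum {V : Type*} [Fintype V] (Γ : SimpleGraph V) : ℕ :=
  Finset.univ.sup fun s : Finset V => if IsIndepSet Γ (s : Set V) then s.card else 0

/-- A graph is split if its vertex set can be partitioned into two disjoint nonempty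
subsets, one a clique and the other an independent set. -/
def IsSplit {V : Type*} (Γ : SimpleGraph V) : Prop :=
  ∃ K I : Set V, K.Nonempty ∧ I.Nonempty ∧ Disjoint K I ∧ K ∪ I = Set.univ ∧
    Γ.IsClique K ∧ IsIndepSet Γ I

lemma dvd_prime_mul' {p m d : ℕ} (hp : p.Prime) (hd : d ∣ p * m) :
    d ∣ m ∨ ∃ d', d = p * d' ∧ d' ∣ m := by
  rcases (Nat.coprime_or_dvd_of_prime hp d) with h | h
  · left
    exact (Nat.Coprime.symm h).dvd_of_dvd_mul_left hd
  · right
    obtain ⟨d', rfl⟩ := h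
    exact ⟨d', rfl, (mul_dvd_mul_iff_left hp.pos.ne').mp hd⟩

lemma divisors_pqr {p₁ p₂ p₃ d : ℕ} (hp₁ : p₁.Prime) (hp₂ : p₂.Prime) (hp₃ : p₃.Prime)
    (hd : d ∣ p₁ * p₂ * p₃) :
    d = 1 ∨ d = p₁ ∨ d = p₂ ∨ d = p₃ ∨ d = p₁ * p₂ ∨ d = p₁ * p₃ ∨ d = p₂ * p₃ ∨
      d = p₁ * p₂ * p₃ := by
  rw [mul_assoc] at hd
  have key : ∀ e : ℕ, e ∣ p₂ * p₃ → e = 1 ∨ e = p₂ ∨ e = p₃ ∨ e = p₂ * p₃ := by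
    intro e he
    rcases dvd_prime_mul' hp₂ he with h | ⟨e', rfl, he'⟩
    · rcases (Nat.Prime.eq_one_or_self_of_dvd hp₃ e h) with h | h <;> tauto
    · rcases (Nat.Prime.eq_one_or_self_of_dvd hp₃ e' he') with h | h <;> subst h <;> simp
  rcases dvd_prime_mul' hp₁ hd with h | ⟨d', rfl, hd'⟩
  · rcases key d h with h | h | h | h <;> tauto
  · rcases key d' hd' with h | h | h | h <;> subst h <;> simp [mul_assoc]

set_option maxHeartbeats 2000000 in
theorem indepNum_cyclic_pqr (n p₁ p₂ p₃ : ℕ) [NeZero n]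
    (hp₁ : p₁.Prime) (hp₂ : p₂.Prime) (hp₃ : p₃.Prime)
    (h₁₂ : p₁ < p₂) (h₂₃ : p₂ < p₃) (hn : n = p₁ * p₂ * p₃) :
    indepNum (primeCoprimeGraph (Multiplicative (ZMod n))) =
      p₁ * (p₂ - 1) * (p₃ - 1) := by
  classical
  set G := Multiplicative (ZMod n) with hG
  have hcard : Fintype.card G = n := by
    exact (Fintype.card_multiplicative (ZMod n)).trans (ZMod.card n)
  -- basic prime inequalities
  have h1 : 2 ≤ p₁ := hp₁.two_le
  have h2 : 2 ≤ p₂ := hp₂.two_le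
  have h3 : 2 ≤ p₃ := hp₃.two_le
  have hne12 : p₁ ≠ p₂ := h₁₂.ne
  have hne23 : p₂ ≠ p₃ := h₂₃.ne
  have hne13 : p₁ ≠ p₃ := (h₁₂.trans h₂₃).ne
  have hcop12 : Nat.Coprime p₁ p₂ := (Nat.coprime_primes hp₁ hp₂).mpr hne12
  have hcop13 : Nat.Coprime p₁ p₃ := (Nat.coprime_primes hp₁ hp₃).mpr hne13
  have hcop23 : Nat.Coprime p₂ p₃ := (Nat.coprime_primes hp₂ hp₃).mpr hne23
  -- totient computations
  have ht23 : Nat.totient (p₂ * p₃) = (p₂ - 1) * (p₃ - 1) := by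
    rw [Nat.totient_mul hcop23, Nat.totient_prime hp₂, Nat.totient_prime hp₃]
  have ht12 : Nat.totient (p₁ * p₂) = (p₁ - 1) * (p₂ - 1) := by
    rw [Nat.totient_mul hcop12, Nat.totient_prime hp₁, Nat.totient_prime hp₂]
  have ht13 : Nat.totient (p₁ * p₃) = (p₁ - 1) * (p₃ - 1) := by
    rw [Nat.totient_mul hcop13, Nat.totient_prime hp₁, Nat.totient_prime hp₃]
  have htn : Nat.totient n = (p₁ - 1) * ((p₂ - 1) * (p₃ - 1)) := by
    rw [hn, mul_assoc, Nat.totient_mul (Nat.Coprime.mul_right hcop12 hcop13),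
      Nat.totient_prime hp₁, Nat.totient_mul hcop23, Nat.totient_prime hp₂, Nat.totient_prime hp₃]
  have hsum : Nat.totient n + Nat.totient (p₂ * p₃) = p₁ * (p₂ - 1) * (p₃ - 1) := by
    have hra : p₁ * (p₂ - 1) * (p₃ - 1) = p₁ * ((p₂ - 1) * (p₃ - 1)) := mul_assoc _ _ _
    rw [htn, ht23, hra, Nat.sub_one_mul]
    have hle : (p₂ - 1) * (p₃ - 1) ≤ p₁ * ((p₂ - 1) * (p₃ - 1)) :=
      Nat.le_mul_of_pos_left _ (by omega)
    omega
  -- not prime facts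
  have h23ge : 2 * 2 ≤ p₂ * p₃ := Nat.mul_le_mul h2 h3
  have h23n : p₂ * p₃ ≠ 1 := by omega
  have hnp23 : ¬ (p₂ * p₃).Prime := Nat.not_prime_mul (by omega) (by omega)
  have hnpn : ¬ n.Prime := by
    rw [hn, mul_assoc]; exact Nat.not_prime_mul (by omega) h23n
  have hn1 : n ≠ 1 := by
    rw [hn, mul_assoc]
    have := Nat.le_mul_of_pos_left (p₂ * p₃) (show 0 < p₁ by omega)
    omega
  have hdvd23n : p₂ * p₃ ∣ n := ⟨p₁, by rw [hn]; ring⟩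
  have h23ltn : p₂ * p₃ ≠ n := by
    rw [hn, mul_assoc]
    have : 2 * (p₂ * p₃) ≤ p₁ * (p₂ * p₃) := Nat.mul_le_mul_right _ h1
    omega
  -- order of any element divides n
  have hord : ∀ g : G, orderOf g ∣ n := by
    intro g
    have h := orderOf_dvd_card (x := g)
    rwa [hcard] at h
  -- the candidate independent set
  set S : Finset G :=
    Finset.univ.filter (fun g => orderOf g = n ∨ orderOf g = p₂ * p₃) with hS
  have hSindep : IsIndepSet (primeCoprimeGraph G) (S : Set G) := by
    intro g hg h hh hgh hadj
    obtain ⟨-, hd⟩ := hadj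
    simp only [hS, Finset.coe_filter, Set.mem_setOf_eq, Finset.mem_coe,
      Finset.mem_filter, Finset.mem_univ, true_and] at hg hh
    have : Nat.gcd (orderOf g) (orderOf h) = n ∨
        Nat.gcd (orderOf g) (orderOf h) = p₂ * p₃ := by
      rcases hg with hg | hg <;> rcases hh with hh | hh <;> rw [hg, hh]
      · left; exact Nat.gcd_self n
      · right; exact Nat.gcd_eq_right hdvd23n
      · right; exact Nat.gcd_eq_left hdvd23n
      · right; exact Nat.gcd_self _
    rcases this with h' | h' <;> rw [h'] at hd
    · tauto
    · tauto
  have hScard : S.card = p₁ * (p₂ - 1) * (p₃ - 1) := by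
    have hdisj : Disjoint (Finset.univ.filter (fun g : G => orderOf g = n))
        (Finset.univ.filter (fun g : G => orderOf g = p₂ * p₃)) := by
      rw [Finset.disjoint_left]
      intro a ha hb
      simp only [Finset.mem_filter] at ha hb
      exact h23ltn (hb.2 ▸ ha.2)
    have : S = Finset.univ.filter (fun g : G => orderOf g = n) ∪
        Finset.univ.filter (fun g : G => orderOf g = p₂ * p₃) := by
      rw [hS, Finset.filter_or]
    rw [this, Finset.card_union_of_disjoint hdisj,
      IsCyclic.card_orderOf_eq_totient (show n ∣ Fintype.card G by rw [hcard]),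
      IsCyclic.card_orderOf_eq_totient (show p₂ * p₃ ∣ Fintype.card G by rw [hcard]; exact hdvd23n), hsum]
  apply le_antisymm
  · -- upper bound
    apply Finset.sup_le
    intro s _
    split_ifs with hs
    · -- s independent
      rw [← hsum]
      by_cases hcard1 : s.card ≤ 1
      · have : 1 ≤ Nat.totient n := Nat.totient_pos.mpr (Nat.pos_of_ne_zero (NeZero.ne n))
        omega
      push_neg at hcard1
      -- every element has order in the 4-set
      have key : ∀ g ∈ s, orderOf g = p₁ * p₂ ∨ orderOf g = p₁ * p₃ ∨
          orderOf g = p₂ * p₃ ∨ orderOf g = n := by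
        intro g hg
        obtain ⟨h, hh, hhg⟩ := Finset.exists_mem_ne hcard1 g
        have hnadj := hs (Finset.mem_coe.mpr hg) (Finset.mem_coe.mpr hh) (Ne.symm hhg)
        have hgcd : Nat.gcd (orderOf g) (orderOf h) ≠ 1 ∧
            ¬ (Nat.gcd (orderOf g) (orderOf h)).Prime := by
          by_contra hc
          exact hnadj ⟨Ne.symm hhg, by tauto⟩
        have primecase : ∀ p : ℕ, p.Prime → orderOf g = p → False := by
          intro p hp hop
          rw [hop] at hgcd
          rcases (hp.eq_one_or_self_of_dvd _ (Nat.gcd_dvd_left p (orderOf h))) with h'' | h''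
          · exact hgcd.1 h''
          · exact hgcd.2 (by rw [h'']; exact hp)
        rcases divisors_pqr hp₁ hp₂ hp₃ (show orderOf g ∣ p₁ * p₂ * p₃ by rw [← hn]; exact hord g) with h' | h' | h' | h' | h' | h' | h' | h'
        · exfalso; apply hgcd.1; rw [h']; exact Nat.gcd_one_left _
        · exact absurd h' (fun h' => primecase p₁ hp₁ h')
        · exact absurd h' (fun h' => primecase p₂ hp₂ h')
        · exact absurd h' (fun h' => primecase p₃ hp₃ h')
        · tauto
        · tauto
        · tauto
        · exact Or.inr (Or.inr (Or.inr (h'.trans hn.symm)))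
      -- gcds of distinct two-prime products are prime
      have gcd1213 : Nat.gcd (p₁ * p₂) (p₁ * p₃) = p₁ := by
        rw [Nat.gcd_mul_left, hcop23, mul_one]
      have gcd1223 : Nat.gcd (p₁ * p₂) (p₂ * p₃) = p₂ := by
        rw [mul_comm p₁ p₂, Nat.gcd_mul_left, hcop13, mul_one]
      have gcd1323 : Nat.gcd (p₁ * p₃) (p₂ * p₃) = p₃ := by
        rw [mul_comm p₁ p₃, mul_comm p₂ p₃, Nat.gcd_mul_left, hcop12, mul_one]
      -- two elements with distinct non-n orders can't coexist
      have key2 : ∀ g ∈ s, ∀ h ∈ s, orderOf g ≠ n → orderOf h ≠ n →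
          orderOf g = orderOf h := by
        intro g hg h hh hgn hhn
        by_cases hgh : g = h
        · rw [hgh]
        have hnadj := hs (Finset.mem_coe.mpr hg) (Finset.mem_coe.mpr hh) hgh
        have hgcd : ¬ (Nat.gcd (orderOf g) (orderOf h)).Prime := by
          by_contra hc
          exact hnadj ⟨hgh, Or.inr hc⟩
        have hg3 : orderOf g = p₁ * p₂ ∨ orderOf g = p₁ * p₃ ∨ orderOf g = p₂ * p₃ := by
          rcases key g hg with h' | h' | h' | h' <;> tauto
        have hh3 : orderOf h = p₁ * p₂ ∨ orderOf h = p₁ * p₃ ∨ orderOf h = p₂ * p₃ := by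
          rcases key h hh with h' | h' | h' | h' <;> tauto
        rcases hg3 with ha | ha | ha <;> rcases hh3 with hb | hb | hb <;>
          rw [ha, hb] at hgcd ⊢
        · exact absurd (by rw [gcd1213]; exact hp₁) hgcd
        · exact absurd (by rw [gcd1223]; exact hp₂) hgcd
        · exact absurd (by rw [Nat.gcd_comm, gcd1213]; exact hp₁) hgcd
        · exact absurd (by rw [gcd1323]; exact hp₃) hgcd
        · exact absurd (by rw [Nat.gcd_comm, gcd1223]; exact hp₂) hgcd
        · exact absurd (by rw [Nat.gcd_comm, gcd1323]; exact hp₃) hgcd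
      -- choose the common non-n order d (or p₂p₃ if none)
      by_cases hex : ∃ g ∈ s, orderOf g ≠ n
      · obtain ⟨g₀, hg₀, hg₀n⟩ := hex
        set d := orderOf g₀ with hd
        have hsub : s ⊆ Finset.univ.filter (fun g : G => orderOf g = n ∨ orderOf g = d) := by
          intro g hg
          simp only [Finset.mem_filter, Finset.mem_univ, true_and]
          by_cases hgn : orderOf g = n
          · exact Or.inl hgn
          · exact Or.inr (key2 g hg g₀ hg₀ hgn hg₀n)
        have hle := Finset.card_le_card hsub
        rw [Finset.filter_or] at hle
        have hle2 := hle.trans (Finset.card_union_le _ _)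
        rw [IsCyclic.card_orderOf_eq_totient (show n ∣ Fintype.card G by rw [hcard]),
          IsCyclic.card_orderOf_eq_totient (show d ∣ Fintype.card G by rw [hcard]; exact hord g₀)] at hle2
        have hdle : Nat.totient d ≤ Nat.totient (p₂ * p₃) := by
          rcases key g₀ hg₀ with h' | h' | h' | h'
          · rw [← hd] at h'; rw [h', ht12, ht23]
            exact Nat.mul_le_mul (by omega) (by omega)
          · rw [← hd] at h'; rw [h', ht13, ht23]
            exact Nat.mul_le_mul (by omega) le_rfl
          · rw [← hd] at h'; rw [h']
          · exact absurd (hd ▸ h') hg₀n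
        omega
      · push_neg at hex
        have hsub : s ⊆ Finset.univ.filter (fun g : G => orderOf g = n) := by
          intro g hg
          simp only [Finset.mem_filter, Finset.mem_univ, true_and]
          exact hex g hg
        have hle := (Finset.card_le_card hsub)
        rw [IsCyclic.card_orderOf_eq_totient (show n ∣ Fintype.card G by rw [hcard])] at hle
        omega
    · exact Nat.zero_le _
  · -- lower bound
    have h : (if IsIndepSet (primeCoprimeGraph G) (S : Set G) then S.card else 0) ≤
        indepNum (primeCoprimeGraph G) :=
      Finset.le_sup (f := fun s : Finset G =>
        if IsIndepSet (primeCoprimeGraph G) (s : Set G) then s.card else 0)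
        (Finset.mem_univ S)
    rw [if_pos hSindep, hScard] at h
    exact h
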